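/- For every polynomial p with complex coefficients and every n ∈ ℕ, the entire function Q_n[p](x) := (−1)^n 3^{−n} e^{x³} (d/dx)^n (e^{−x³} p(x)) is a polynomial of degree 2n + deg p; it satisfies the difference-differential equation Q_n[p](x) = x² Q_{n−1}[p](x) − (1/3) (Q_{n−1}[p])'(x) for all n ≥ 1 and all x ∈ ℂ; and if p is monic then Q_n[p] is monic. -/

import Mathlib

/-- `Q n p x = (−1)ⁿ 3⁻ⁿ e^{x³} (d/dx)ⁿ (e^{−x³} p(x))`. -/
noncomputable def Q (n : ℕ) (p : Polynomial ℂ) : ℂ → ℂ := fun x =>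
  (-1) ^ n / 3 ^ n * Complex.exp (x ^ 3) *
    iteratedDeriv n (fun z => Complex.exp (-z ^ 3) * p.eval z) x

noncomputable def Qpoly (p : Polynomial ℂ) : ℕ → Polynomial ℂ
  | 0 => p
  | n + 1 => Polynomial.X ^ 2 * Qpoly p n - Polynomial.C (1/3 : ℂ) * (Qpoly p n).derivative

lemma hasDerivAtAux (q : Polynomial ℂ) (x : ℂ) :
    HasDerivAt (fun z => Complex.exp (-z ^ 3) * q.eval z)
      (Complex.exp (-x ^ 3) * -(3 * x ^ 2) * q.eval x
        + Complex.exp (-x ^ 3) * q.derivative.eval x) x := by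
  have h1 : HasDerivAt (fun z : ℂ => -z ^ 3) (-(3 * x ^ 2)) x := by
    simpa using (hasDerivAt_pow 3 x).fun_neg
  have h2 : HasDerivAt (fun z : ℂ => Complex.exp (-z ^ 3))
      (Complex.exp (-x ^ 3) * -(3 * x ^ 2)) x := (Complex.hasDerivAt_exp _).comp x h1
  exact h2.mul (q.hasDerivAt x)

lemma iter_eq (p : Polynomial ℂ) (n : ℕ) (x : ℂ) :
    iteratedDeriv n (fun z => Complex.exp (-z ^ 3) * p.eval z) x
      = (-3) ^ n * Complex.exp (-x ^ 3) * (Qpoly p n).eval x := by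
  induction n generalizing x with
  | zero => simp [Qpoly]
  | succ n ih =>
    rw [iteratedDeriv_succ]
    have hf : iteratedDeriv n (fun z => Complex.exp (-z ^ 3) * p.eval z)
        = fun x => (-3) ^ n * (Complex.exp (-x ^ 3) * (Qpoly p n).eval x) := by
      funext y; rw [ih y]; ring
    rw [hf]
    have h := ((hasDerivAtAux (Qpoly p n) x).const_mul ((-3 : ℂ) ^ n)).deriv
    rw [h]
    simp only [Qpoly, Polynomial.eval_sub, Polynomial.eval_mul, Polynomial.eval_pow,
      Polynomial.eval_X, Polynomial.eval_C]
    ring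

lemma Q_eq (p : Polynomial ℂ) (n : ℕ) (x : ℂ) : Q n p x = (Qpoly p n).eval x := by
  have hexp : Complex.exp (x ^ 3) * Complex.exp (-x ^ 3) = 1 := by
    rw [← Complex.exp_add]; simp
  have h3 : ((-1 : ℂ)) ^ n / 3 ^ n * (-3) ^ n = 1 := by
    rw [show ((-3 : ℂ)) = (-1) * 3 by ring, mul_pow]
    field_simp
    rw [← pow_mul, mul_comm, pow_mul]
    norm_num
  calc Q n p x = ((-1) ^ n / 3 ^ n * (-3) ^ n) * (Complex.exp (x ^ 3) * Complex.exp (-x ^ 3))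
        * (Qpoly p n).eval x := by
        unfold Q; rw [iter_eq]; ring
    _ = (Qpoly p n).eval x := by rw [hexp, h3]; ring

lemma Qpoly_spec (p : Polynomial ℂ) (hp : p ≠ 0) (n : ℕ) :
    (Qpoly p n).degree = ((2 * n : ℕ) : WithBot ℕ) + p.degree ∧
      (Qpoly p n).leadingCoeff = p.leadingCoeff := by
  induction n with
  | zero => simp [Qpoly]
  | succ n ih =>
    obtain ⟨hd, hl⟩ := ih
    have hq : Qpoly p n ≠ 0 := by
      intro h
      apply hp
      rw [← Polynomial.leadingCoeff_eq_zero, ← hl, h, Polynomial.leadingCoeff_zero]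
    have hdm : (Polynomial.X ^ 2 * Qpoly p n).degree
        = ((2 : ℕ) : WithBot ℕ) + (Qpoly p n).degree := by
      rw [Polynomial.degree_mul, Polynomial.degree_X_pow]
    have hlt : (Polynomial.C (1/3 : ℂ) * (Qpoly p n).derivative).degree
        < (Polynomial.X ^ 2 * Qpoly p n).degree := by
      rw [hdm]
      refine lt_of_lt_of_le (lt_of_le_of_lt ?_ (Polynomial.degree_derivative_lt hq)) ?_
      · refine (Polynomial.degree_mul_le _ _).trans ?_
        simpa using add_le_add_right Polynomial.degree_C_le _
      · exact le_add_of_nonneg_left (by exact_mod_cast Nat.zero_le 2)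
    constructor
    · rw [show Qpoly p (n+1) = Polynomial.X ^ 2 * Qpoly p n
          - Polynomial.C (1/3 : ℂ) * (Qpoly p n).derivative from rfl,
        Polynomial.degree_sub_eq_left_of_degree_lt hlt, hdm, hd]
      rw [show (2 * (n+1) : ℕ) = 2 + 2 * n by ring]
      push_cast
      rw [add_assoc]
    · rw [show Qpoly p (n+1) = Polynomial.X ^ 2 * Qpoly p n
          - Polynomial.C (1/3 : ℂ) * (Qpoly p n).derivative from rfl,
        Polynomial.leadingCoeff_sub_of_degree_lt hlt,
        Polynomial.leadingCoeff_monic_mul (Polynomial.monic_X_pow 2), hl]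

/-- `Q n p` is a polynomial of degree `2n + deg p`, it is monic
whenever `p` is monic, and it satisfies the difference-differential equation
`Q_n[p](x) = x² Q_{n−1}[p](x) − (1/3)(Q_{n−1}[p])'(x)` for `n ≥ 1`. -/
theorem stmt2 (p : Polynomial ℂ) (n : ℕ) :
    (∃ q : Polynomial ℂ,
      (∀ x : ℂ, Q n p x = q.eval x) ∧
      q.degree = ((2 * n : ℕ) : WithBot ℕ) + p.degree ∧
      (p.Monic → q.Monic)) ∧
    (1 ≤ n → ∀ x : ℂ,
      Q n p x = x ^ 2 * Q (n - 1) p x - (1 / 3) * deriv (Q (n - 1) p) x) := by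
  constructor
  · refine ⟨Qpoly p n, fun x => Q_eq p n x, ?_⟩
    by_cases hp : p = 0
    · subst hp
      have : Qpoly 0 n = 0 := by
        induction n with
        | zero => rfl
        | succ n ih => simp [Qpoly, ih]
      rw [this]
      refine ⟨by simp, ?_⟩
      intro hm
      exact absurd rfl hm.ne_zero
    · obtain ⟨hd, hl⟩ := Qpoly_spec p hp n
      exact ⟨hd, fun hm => by rwa [Polynomial.Monic, hl]⟩
  · rintro hn x
    obtain ⟨m, rfl⟩ : ∃ m, n = m + 1 := ⟨n - 1, (Nat.succ_pred_eq_of_pos hn).symm⟩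
    have hQm : Q (m + 1 - 1) p = fun x => (Qpoly p m).eval x := by
      funext y; exact Q_eq p m y
    rw [hQm, Q_eq p (m+1) x]
    rw [Polynomial.deriv]
    simp only [Qpoly, Polynomial.eval_sub, Polynomial.eval_mul, Polynomial.eval_pow,
      Polynomial.eval_X, Polynomial.eval_C]
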